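/- Let d be a real quadratic algebraic integer with 1 < d < √2 and conjugate d* ≥ d satisfying 1/d² ≤ 9/16 - (1/4 - 1/d*)², and suppose d > 4/3. Then (3d - 4)(3d* - 4) ≥ 1 implies d ≥ (√41 - 1)/4. -/

import Mathlib

/-- Let `d` be a real quadratic algebraic integer with `1 < d < √2`, with
conjugate `d* ≥ d` satisfying `1/d² ≤ 9/16 - (1/4 - 1/d*)²`, and suppose
`d > 4/3`. Then `(3d - 4)(3d* - 4) ≥ 1` implies `d ≥ (√41 - 1)/4`. -/
theorem stmt_10 (d ds : ℝ) (hd_int : IsIntegral ℤ d)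
    (hdeg : (minpoly ℚ d).natDegree = 2)
    (hconj : Polynomial.aeval ds (minpoly ℚ d) = 0)
    (h1 : 1 < d) (h2 : d < Real.sqrt 2) (hds : d ≤ ds)
    (hK : 1 / d ^ 2 ≤ 9 / 16 - (1 / 4 - 1 / ds) ^ 2)
    (h43 : 4 / 3 < d)
    (hprod : 1 ≤ (3 * d - 4) * (3 * ds - 4)) :
    (Real.sqrt 41 - 1) / 4 ≤ d := by
  by_contra hcon
  push_neg at hcon
  have hr : Real.sqrt 41 ^ 2 = 41 := Real.sq_sqrt (by norm_num)
  have hrpos : (0:ℝ) < Real.sqrt 41 := Real.sqrt_pos.mpr (by norm_num)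
  -- from hcon: 4d + 1 < √41, both positive, so (4d+1)² < 41
  have hq : 2 * d ^ 2 + d - 5 < 0 := by nlinarith [hcon, hr, hrpos]
  have h118 : d < 11 / 8 := by nlinarith
  have hdpos : (0:ℝ) < d := by linarith
  have hds0 : (0:ℝ) < ds := by linarith
  have h3d : (0:ℝ) < 3 * d - 4 := by linarith
  have h45 : (0:ℝ) < 4 * d - 5 := by linarith
  have hds2 : (4 * d - 5) ≤ ds * (3 * d - 4) := by nlinarith [hprod]
  have hinv : 1 / ds ≤ (3 * d - 4) / (4 * d - 5) := by
    rw [div_le_div_iff₀ hds0 h45]; nlinarith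
  have hu : (0:ℝ) ≤ 1 / 4 - (3 * d - 4) / (4 * d - 5) := by
    rw [sub_nonneg, div_le_iff₀ h45]; nlinarith
  have ht : (1 / 4 - (3 * d - 4) / (4 * d - 5)) ^ 2 ≤ (1 / 4 - 1 / ds) ^ 2 :=
    pow_le_pow_left₀ hu (by linarith) 2
  have hu_eq : 1 / 4 - (3 * d - 4) / (4 * d - 5) = (11 - 8 * d) / (4 * (4 * d - 5)) := by
    field_simp; ring
  rw [hu_eq] at ht
  have hkey : 1 / d ^ 2 ≤ 9 / 16 - ((11 - 8 * d) / (4 * (4 * d - 5))) ^ 2 := by linarith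
  have hd2 : (0:ℝ) < d ^ 2 := by positivity
  have h452 : (0:ℝ) < (4 * (4 * d - 5)) ^ 2 := by positivity
  have hfin : 16 * (4 * d - 5) ^ 2 ≤ d ^ 2 * (9 * (4 * d - 5) ^ 2 - (11 - 8 * d) ^ 2) := by
    have h1 : (1 / d ^ 2) * (d ^ 2 * (4 * (4 * d - 5)) ^ 2)
        ≤ (9 / 16 - ((11 - 8 * d) / (4 * (4 * d - 5))) ^ 2) * (d ^ 2 * (4 * (4 * d - 5)) ^ 2) := by
      apply mul_le_mul_of_nonneg_right hkey (by positivity)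
    have e1 : (1 / d ^ 2) * (d ^ 2 * (4 * (4 * d - 5)) ^ 2) = 16 * (4 * d - 5) ^ 2 := by
      field_simp; ring
    have e2 : (9 / 16 - ((11 - 8 * d) / (4 * (4 * d - 5))) ^ 2) * (d ^ 2 * (4 * (4 * d - 5)) ^ 2)
        = d ^ 2 * (9 * (4 * d - 5) ^ 2 - (11 - 8 * d) ^ 2) := by
      have h45ne : (4 * d - 5) ≠ 0 := h45.ne'
      have hb : ((11 - 8 * d) / (4 * (4 * d - 5))) ^ 2 * (4 * (4 * d - 5)) ^ 2 = (11 - 8 * d) ^ 2 := by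
        rw [← mul_pow, div_mul_cancel₀ _ (mul_ne_zero four_ne_zero h45ne)]
      linear_combination (-d ^ 2) * hb
    rw [e1, e2] at h1; exact h1
  have h5 : (0:ℝ) < 5 * d ^ 2 - 14 * d + 10 := by nlinarith [sq_nonneg (d - 7/5)]
  have hmul : (2 * d ^ 2 + d - 5) * (5 * d ^ 2 - 14 * d + 10) < 0 :=
    mul_neg_of_neg_of_pos hq h5
  have hexp : d ^ 2 * (9 * (4 * d - 5) ^ 2 - (11 - 8 * d) ^ 2) - 16 * (4 * d - 5) ^ 2
      = 8 * ((2 * d ^ 2 + d - 5) * (5 * d ^ 2 - 14 * d + 10)) := by ring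
  linarith
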